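/- Let E₁ = {x : (x−μ₁)ᵀΣ₁⁻¹(x−μ₁) ≤ 1} and E₂ = {x : (x−μ₂)ᵀΣ₂⁻¹(x−μ₂) ≤ 1} be ellipsoids in ℝⁿ with Σ₁, Σ₂ positive definite. For any fixed direction l with ρ₁ = √(lᵀΣ₁l) > 0 and ρ₂ = √(lᵀΣ₂l) > 0, set κ = ρ₁ + ρ₂ and Σ = κ(Σ₁/ρ₁ + Σ₂/ρ₂). Then the Minkowski sum E₁ ⊕ E₂ is contained in the ellipsoid {x : (x − (μ₁+μ₂))ᵀ Σ⁻¹ (x − (μ₁+μ₂)) ≤ 1}. -/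

import Mathlib

open Matrix Pointwise

section aux
variable {n : ℕ}

lemma symm_dot (A : Matrix (Fin n) (Fin n) ℝ) (hA : A.IsHermitian) (x y : Fin n → ℝ) :
    x ⬝ᵥ A *ᵥ y = y ⬝ᵥ A *ᵥ x := by
  have hT : Aᵀ = A := by
    rw [← conjTranspose_eq_transpose_of_trivial, hA.eq]
  rw [dotProduct_mulVec, ← mulVec_transpose, dotProduct_comm, hT]

lemma cs_psd (A : Matrix (Fin n) (Fin n) ℝ) (hA : A.PosSemidef) (x y : Fin n → ℝ) :
    (x ⬝ᵥ A *ᵥ y) ^ 2 ≤ (x ⬝ᵥ A *ᵥ x) * (y ⬝ᵥ A *ᵥ y) := by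
  have key : ∀ t : ℝ, 0 ≤ (y ⬝ᵥ A *ᵥ y) * (t * t) + (2 * (x ⬝ᵥ A *ᵥ y)) * t + (x ⬝ᵥ A *ᵥ x) := by
    intro t
    have h0 := hA.dotProduct_mulVec_nonneg (x + t • y)
    simp only [star_trivial] at h0
    have hexp : (x + t • y) ⬝ᵥ A *ᵥ (x + t • y) =
        (y ⬝ᵥ A *ᵥ y) * (t * t) + (2 * (x ⬝ᵥ A *ᵥ y)) * t + (x ⬝ᵥ A *ᵥ x) := by
      rw [mulVec_add, dotProduct_add, add_dotProduct, add_dotProduct,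
        mulVec_smul, dotProduct_smul, smul_dotProduct, smul_dotProduct,
        dotProduct_smul, symm_dot A hA.1 y x]
      simp [smul_eq_mul]; ring
    linarith [hexp ▸ h0]
  have hd := discrim_le_zero key
  rw [discrim] at hd
  nlinarith [hd]

lemma two_cs (a₁ a₂ p₁ p₂ q₁ q₂ : ℝ) (h1 : a₁ ^ 2 ≤ p₁ * q₁) (h2 : a₂ ^ 2 ≤ p₂ * q₂)
    (hp1 : 0 ≤ p₁) (hp2 : 0 ≤ p₂) (hq1 : 0 ≤ q₁) (hq2 : 0 ≤ q₂)
    (hS : p₁ + p₂ = a₁ + a₂) : a₁ + a₂ ≤ q₁ + q₂ := by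
  have hmul : a₁ ^ 2 * a₂ ^ 2 ≤ (p₁ * q₁) * (p₂ * q₂) :=
    mul_le_mul h1 h2 (sq_nonneg _) (mul_nonneg hp1 hq1)
  have hamg : 2 * (a₁ * a₂) ≤ p₁ * q₂ + p₂ * q₁ := by
    nlinarith [sq_nonneg (p₁ * q₂ - p₂ * q₁), mul_nonneg (mul_nonneg hp1 hq2) (mul_nonneg hp2 hq1),
      add_nonneg (mul_nonneg hp1 hq2) (mul_nonneg hp2 hq1), sq_nonneg (a₁ * a₂)]
  have hcs : (a₁ + a₂) ^ 2 ≤ (p₁ + p₂) * (q₁ + q₂) := by nlinarith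
  have hnn : 0 ≤ a₁ + a₂ := hS ▸ add_nonneg hp1 hp2
  rcases hnn.eq_or_lt with h | h
  · rw [← h]; exact add_nonneg hq1 hq2
  · nlinarith

lemma key_lemma (A B : Matrix (Fin n) (Fin n) ℝ) (hA : A.PosDef) (hB : B.PosDef)
    (u v : Fin n → ℝ) :
    (u + v) ⬝ᵥ (A + B)⁻¹ *ᵥ (u + v) ≤ u ⬝ᵥ A⁻¹ *ᵥ u + v ⬝ᵥ B⁻¹ *ᵥ v := by
  have hAB : (A + B).PosDef := by
    refine PosDef.of_dotProduct_mulVec_pos (hA.1.add hB.1) (fun x hx => ?_)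
    have h1 := hA.dotProduct_mulVec_pos hx; have h2 := hB.dotProduct_mulVec_pos hx
    simp only [add_mulVec, dotProduct_add] at *
    linarith
  set w := (A + B)⁻¹ *ᵥ (u + v) with hw
  have hABw : (A + B) *ᵥ w = u + v := by
    rw [hw, mulVec_mulVec, Matrix.mul_nonsing_inv _ ((isUnit_iff_isUnit_det _).mp hAB.isUnit),
      one_mulVec]
  have hAu : A *ᵥ (A⁻¹ *ᵥ u) = u := by
    rw [mulVec_mulVec, Matrix.mul_nonsing_inv _ ((isUnit_iff_isUnit_det _).mp hA.isUnit),
      one_mulVec]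
  have hBv : B *ᵥ (B⁻¹ *ᵥ v) = v := by
    rw [mulVec_mulVec, Matrix.mul_nonsing_inv _ ((isUnit_iff_isUnit_det _).mp hB.isUnit),
      one_mulVec]
  have hS : (u + v) ⬝ᵥ (A + B)⁻¹ *ᵥ (u + v) = w ⬝ᵥ A *ᵥ w + w ⬝ᵥ B *ᵥ w := by
    rw [← hw, dotProduct_comm, ← hABw, symm_dot _ hAB.1, add_mulVec, dotProduct_add]
  -- quadratic-form values
  have hq1 : (A⁻¹ *ᵥ u) ⬝ᵥ A *ᵥ (A⁻¹ *ᵥ u) = u ⬝ᵥ A⁻¹ *ᵥ u := by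
    rw [hAu, dotProduct_comm]
  have hq2 : (B⁻¹ *ᵥ v) ⬝ᵥ B *ᵥ (B⁻¹ *ᵥ v) = v ⬝ᵥ B⁻¹ *ᵥ v := by
    rw [hBv, dotProduct_comm]
  have ha1 : u ⬝ᵥ w = w ⬝ᵥ A *ᵥ (A⁻¹ *ᵥ u) := by rw [hAu, dotProduct_comm]
  have ha2 : v ⬝ᵥ w = w ⬝ᵥ B *ᵥ (B⁻¹ *ᵥ v) := by rw [hBv, dotProduct_comm]
  have hcs1 := cs_psd A hA.posSemidef w (A⁻¹ *ᵥ u)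
  have hcs2 := cs_psd B hB.posSemidef w (B⁻¹ *ᵥ v)
  rw [hq1] at hcs1
  rw [hq2] at hcs2
  rw [← ha1] at hcs1
  rw [← ha2] at hcs2
  have hp1 : 0 ≤ w ⬝ᵥ A *ᵥ w := by simpa using hA.posSemidef.dotProduct_mulVec_nonneg w
  have hp2 : 0 ≤ w ⬝ᵥ B *ᵥ w := by simpa using hB.posSemidef.dotProduct_mulVec_nonneg w
  have hq1n : 0 ≤ u ⬝ᵥ A⁻¹ *ᵥ u := by simpa using hA.inv.posSemidef.dotProduct_mulVec_nonneg u
  have hq2n : 0 ≤ v ⬝ᵥ B⁻¹ *ᵥ v := by simpa using hB.inv.posSemidef.dotProduct_mulVec_nonneg v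
  have hSsum : (w ⬝ᵥ A *ᵥ w) + (w ⬝ᵥ B *ᵥ w) = u ⬝ᵥ w + v ⬝ᵥ w := by
    rw [← hS, ← hw, add_dotProduct]
  have := two_cs (u ⬝ᵥ w) (v ⬝ᵥ w) (w ⬝ᵥ A *ᵥ w) (w ⬝ᵥ B *ᵥ w)
    (u ⬝ᵥ A⁻¹ *ᵥ u) (v ⬝ᵥ B⁻¹ *ᵥ v) hcs1 hcs2 hp1 hp2 hq1n hq2n hSsum
  calc (u + v) ⬝ᵥ (A + B)⁻¹ *ᵥ (u + v) = u ⬝ᵥ w + v ⬝ᵥ w := by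
        rw [← hw, add_dotProduct]
    _ ≤ _ := this

lemma posdef_smul (A : Matrix (Fin n) (Fin n) ℝ) (hA : A.PosDef) {c : ℝ} (hc : 0 < c) :
    (c • A).PosDef := by
  have hherm : (c • A).IsHermitian := by
    rw [Matrix.IsHermitian, conjTranspose_smul, hA.1.eq, star_trivial]
  refine PosDef.of_dotProduct_mulVec_pos hherm (fun x hx => ?_)
  have := hA.dotProduct_mulVec_pos hx
  simp only [smul_mulVec, dotProduct_smul, smul_eq_mul]
  exact mul_pos hc this

end aux

/-- Directional-scaling outer ellipsoidal approximation of the Minkowski sum of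
two ellipsoids. -/
theorem minkowski_sum_ellipsoid_outer {n : ℕ}
    (Sig1 Sig2 : Matrix (Fin n) (Fin n) ℝ) (hSig1 : Sig1.PosDef) (hSig2 : Sig2.PosDef)
    (μ₁ μ₂ : Fin n → ℝ) (l : Fin n → ℝ)
    (r1 r2 κ : ℝ)
    (hr1 : r1 = Real.sqrt (l ⬝ᵥ Sig1 *ᵥ l)) (hr1pos : 0 < r1)
    (hr2 : r2 = Real.sqrt (l ⬝ᵥ Sig2 *ᵥ l)) (hr2pos : 0 < r2)
    (hκ : κ = r1 + r2)
    (Sig : Matrix (Fin n) (Fin n) ℝ)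
    (hSig : Sig = κ • (r1⁻¹ • Sig1 + r2⁻¹ • Sig2)) :
    {x : Fin n → ℝ | (x - μ₁) ⬝ᵥ Sig1⁻¹ *ᵥ (x - μ₁) ≤ 1} +
      {x : Fin n → ℝ | (x - μ₂) ⬝ᵥ Sig2⁻¹ *ᵥ (x - μ₂) ≤ 1} ⊆
      {x : Fin n → ℝ | (x - (μ₁ + μ₂)) ⬝ᵥ Sig⁻¹ *ᵥ (x - (μ₁ + μ₂)) ≤ 1} := by
  intro x hx
  rw [Set.mem_add] at hx
  obtain ⟨a, ha, b, hb, rfl⟩ := hx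
  simp only [Set.mem_setOf_eq] at ha hb ⊢
  have hκpos : 0 < κ := by rw [hκ]; linarith
  set c1 : ℝ := κ * r1⁻¹ with hc1
  set c2 : ℝ := κ * r2⁻¹ with hc2
  have hc1pos : 0 < c1 := mul_pos hκpos (inv_pos.mpr hr1pos)
  have hc2pos : 0 < c2 := mul_pos hκpos (inv_pos.mpr hr2pos)
  have hSig' : Sig = c1 • Sig1 + c2 • Sig2 := by
    rw [hSig, smul_add, smul_smul, smul_smul]
  set u := a - μ₁ with hu
  set v := b - μ₂ with hv
  have hxsub : a + b - (μ₁ + μ₂) = u + v := by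
    rw [hu, hv]; abel
  rw [hxsub, hSig']
  have hA : (c1 • Sig1).PosDef := posdef_smul Sig1 hSig1 hc1pos
  have hB : (c2 • Sig2).PosDef := posdef_smul Sig2 hSig2 hc2pos
  have hkey := key_lemma (c1 • Sig1) (c2 • Sig2) hA hB u v
  -- compute the scaled inverses
  have hinv1 : (c1 • Sig1)⁻¹ = c1⁻¹ • Sig1⁻¹ := by
    haveI : Invertible c1 := invertibleOfNonzero hc1pos.ne'
    rw [Matrix.inv_smul (A := Sig1) c1 ((isUnit_iff_isUnit_det _).mp hSig1.isUnit), invOf_eq_inv]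
  have hinv2 : (c2 • Sig2)⁻¹ = c2⁻¹ • Sig2⁻¹ := by
    haveI : Invertible c2 := invertibleOfNonzero hc2pos.ne'
    rw [Matrix.inv_smul (A := Sig2) c2 ((isUnit_iff_isUnit_det _).mp hSig2.isUnit), invOf_eq_inv]
  rw [hinv1, hinv2] at hkey
  simp only [smul_mulVec, dotProduct_smul, smul_eq_mul] at hkey
  have hq1n : 0 ≤ u ⬝ᵥ Sig1⁻¹ *ᵥ u := by simpa using hSig1.inv.posSemidef.dotProduct_mulVec_nonneg u
  have hq2n : 0 ≤ v ⬝ᵥ Sig2⁻¹ *ᵥ v := by simpa using hSig2.inv.posSemidef.dotProduct_mulVec_nonneg v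
  have hb1 : c1⁻¹ * (u ⬝ᵥ Sig1⁻¹ *ᵥ u) ≤ c1⁻¹ :=
    (mul_le_of_le_one_right (inv_nonneg.mpr hc1pos.le) ha)
  have hb2 : c2⁻¹ * (v ⬝ᵥ Sig2⁻¹ *ᵥ v) ≤ c2⁻¹ :=
    (mul_le_of_le_one_right (inv_nonneg.mpr hc2pos.le) hb)
  have hsum : c1⁻¹ + c2⁻¹ = 1 := by
    rw [hc1, hc2, mul_inv, mul_inv, inv_inv, inv_inv, hκ]
    field_simp
  linarith
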